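/- Let b be an integrable function supported on an interval J with ∫ b = 0 and ‖b‖₁ ≤ λ|J|, and let Φ_K^∞ be an L^∞-normalized bump adapted to a dyadic interval K with |K| > |J|. Then |⟨b, Φ_K^∞⟩| ≲ λ|J| · (|J|/|K|) · (1 + dist(K,J)/|K|)^{-10}, and consequently Σ_{|K|>|J|} |⟨b, Φ_K^∞⟩| ≲ λ|J|. -/

import Mathlib

open MeasureTheory
open scoped ENNReal

/-- The dyadic interval `[2^k m, 2^k (m+1)]`. -/
noncomputable def dyadIcc (k m : ℤ) : Set ℝ :=
  Set.Icc ((2:ℝ) ^ k * m) ((2:ℝ) ^ k * (m + 1))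

/-- Distance between two sets of reals. -/
noncomputable def setDist (s t : Set ℝ) : ℝ :=
  sInf {r : ℝ | ∃ x ∈ s, ∃ y ∈ t, r = dist x y}

/- ### Auxiliary lemmas about `setDist` -/

lemma setDist_bddBelow (s t : Set ℝ) :
    BddBelow {r : ℝ | ∃ x ∈ s, ∃ y ∈ t, r = dist x y} := by
  refine ⟨0, ?_⟩
  rintro r ⟨x, hx, y, hy, rfl⟩
  exact dist_nonneg

lemma le_setDist {s t : Set ℝ} (hs : s.Nonempty) (ht : t.Nonempty) {r : ℝ}
    (h : ∀ x ∈ s, ∀ y ∈ t, r ≤ dist x y) : r ≤ setDist s t := by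
  refine le_csInf ⟨dist hs.choose ht.choose, hs.choose, hs.choose_spec,
    ht.choose, ht.choose_spec, rfl⟩ ?_
  rintro q ⟨x, hx, y, hy, rfl⟩
  exact h x hx y hy

lemma setDist_nonneg {s t : Set ℝ} (hs : s.Nonempty) (ht : t.Nonempty) :
    0 ≤ setDist s t :=
  le_setDist hs ht fun _ _ _ _ => dist_nonneg

lemma setDist_le_infDist {s t : Set ℝ} {x : ℝ} (hs : s.Nonempty) (hx : x ∈ t) :
    setDist s t ≤ Metric.infDist x s := by
  refine le_of_forall_pos_le_add fun ε hε => ?_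
  have h : Metric.infDist x s < Metric.infDist x s + ε := by linarith
  obtain ⟨a, has, ha⟩ := (Metric.infDist_lt_iff hs).mp h
  have hmem : dist a x ∈ {r : ℝ | ∃ p ∈ s, ∃ q ∈ t, r = dist p q} :=
    ⟨a, has, x, hx, rfl⟩
  calc setDist s t ≤ dist a x := csInf_le (setDist_bddBelow s t) hmem
  _ ≤ _ := by rw [dist_comm]; linarith

lemma dyadIcc_nonempty (k m : ℤ) : (dyadIcc k m).Nonempty := by
  have hp : (0:ℝ) < (2:ℝ) ^ k := zpow_pos (by norm_num) k
  exact Set.nonempty_Icc.mpr (by nlinarith)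

/- ### rpow helper -/

lemma rpow_neg_two_eq (x : ℝ) (hx : 0 < x) : x ^ (-(2:ℝ)) = (x ^ 2)⁻¹ := by
  rw [show (-(2:ℝ)) = -((2:ℕ):ℝ) by norm_num, Real.rpow_neg hx.le, Real.rpow_natCast]

/- ### The sum over ℕ -/

lemma nat_sum_bound :
    (∑' n : ℕ, ENNReal.ofReal (9 * ((1 + (n:ℝ)) ^ 2)⁻¹)) ≤ 27 := by
  have hnonneg : ∀ n : ℕ, 0 ≤ 9 * ((1 + (n:ℝ)) ^ 2)⁻¹ := by
    intro n; positivity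
  have hsumf : Summable (fun n : ℕ => (1:ℝ) / (n:ℝ) ^ 2) := hasSum_zeta_two.summable
  have hsumg : Summable (fun n : ℕ => ((1 + (n:ℝ)) ^ 2)⁻¹) := by
    have h := hsumf.comp_injective Nat.succ_injective
    refine h.congr fun n => ?_
    simp only [Function.comp_apply]
    rw [inv_eq_one_div]
    congr 1
    push_cast
    ring
  have hsum9 : Summable (fun n : ℕ => 9 * ((1 + (n:ℝ)) ^ 2)⁻¹) := hsumg.mul_left 9
  rw [← ENNReal.ofReal_tsum_of_nonneg hnonneg hsum9]
  have ht : (∑' n : ℕ, 9 * ((1 + (n:ℝ)) ^ 2)⁻¹) = 9 * ∑' n : ℕ, ((1 + (n:ℝ)) ^ 2)⁻¹ :=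
    tsum_mul_left
  have htle : (∑' n : ℕ, ((1 + (n:ℝ)) ^ 2)⁻¹) ≤ Real.pi ^ 2 / 6 := by
    rw [← hasSum_zeta_two.tsum_eq]
    refine Summable.tsum_le_tsum_of_inj Nat.succ Nat.succ_injective
      (fun n _ => by positivity) (fun n => ?_) hsumg hsumf
    rw [inv_eq_one_div]
    apply le_of_eq
    congr 1
    push_cast
    ring
  have hpi : Real.pi ^ 2 / 6 ≤ 3 := by nlinarith [Real.pi_le_four, Real.pi_pos]
  calc ENNReal.ofReal (∑' n : ℕ, 9 * ((1 + (n:ℝ)) ^ 2)⁻¹)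
      ≤ ENNReal.ofReal 27 := by
        apply ENNReal.ofReal_le_ofReal
        rw [ht]
        have h0 : (0:ℝ) ≤ ∑' n : ℕ, ((1 + (n:ℝ)) ^ 2)⁻¹ :=
          tsum_nonneg fun n => by positivity
        nlinarith
  _ ≤ 27 := by rw [show ((27:ℝ≥0∞)) = ENNReal.ofReal 27 from (ENNReal.ofReal_ofNat 27).symm]

/- ### The sum over m : ℤ for fixed k -/

lemma msum_bound {c d : ℝ} (hcd : c < d) {k : ℤ} (hk : d - c < (2:ℝ) ^ k) :
    (∑' m : ℤ, ENNReal.ofReal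
        ((1 + setDist (dyadIcc k m) (Set.Icc c d) / (2:ℝ) ^ k) ^ (-(10:ℝ)))) ≤ 54 := by
  set p : ℝ := (2:ℝ) ^ k with hpdef
  have hp0 : (0:ℝ) < p := zpow_pos (by norm_num) k
  set m₀ : ℤ := ⌊c / p⌋ with hm₀
  have hJne : (Set.Icc c d).Nonempty := Set.nonempty_Icc.mpr hcd.le
  have hfl1 : p * (m₀ : ℝ) ≤ c := by
    have h := Int.floor_le (c / p)
    calc p * (m₀ : ℝ) ≤ p * (c / p) := mul_le_mul_of_nonneg_left h hp0.le
    _ = c := by field_simp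
  have hfl2 : c < p * ((m₀ : ℝ) + 1) := by
    have h := Int.lt_floor_add_one (c / p)
    calc c = p * (c / p) := by field_simp
    _ < p * ((m₀ : ℝ) + 1) := mul_lt_mul_of_pos_left h hp0
  have hd : d < p * ((m₀ : ℝ) + 2) := by nlinarith
  set h : ℤ → ℝ≥0∞ := fun n => ENNReal.ofReal (9 * ((1 + |(n:ℝ)|) ^ 2)⁻¹) with hh
  have key : ∀ m : ℤ, ENNReal.ofReal
      ((1 + setDist (dyadIcc k m) (Set.Icc c d) / p) ^ (-(10:ℝ))) ≤ h (m - m₀) := by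
    intro m
    set ds := setDist (dyadIcc k m) (Set.Icc c d) with hds
    set j : ℝ := ((m - m₀ : ℤ) : ℝ) with hj
    have hjcast : j = (m : ℝ) - (m₀ : ℝ) := by rw [hj]; push_cast; ring
    have hds0 : 0 ≤ ds := setDist_nonneg (dyadIcc_nonempty k m) hJne
    have hlow1 : p * ((m : ℝ) - (m₀ : ℝ) - 2) ≤ ds := by
      refine le_setDist (dyadIcc_nonempty k m) hJne (fun x hx y hy => ?_)
      obtain ⟨hx1, hx2⟩ := hx
      obtain ⟨hy1, hy2⟩ := hy
      rw [Real.dist_eq]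
      have h1 : x - y ≤ |x - y| := le_abs_self _
      nlinarith
    have hlow2 : p * ((m₀ : ℝ) - (m : ℝ) - 1) ≤ ds := by
      refine le_setDist (dyadIcc_nonempty k m) hJne (fun x hx y hy => ?_)
      obtain ⟨hx1, hx2⟩ := hx
      obtain ⟨hy1, hy2⟩ := hy
      rw [Real.dist_eq]
      have h1 : -(x - y) ≤ |x - y| := neg_le_abs (x - y)
      nlinarith
    have hdiv1 : (m : ℝ) - (m₀ : ℝ) - 2 ≤ ds / p := by
      rw [le_div_iff₀ hp0]; nlinarith
    have hdiv2 : (m₀ : ℝ) - (m : ℝ) - 1 ≤ ds / p := by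
      rw [le_div_iff₀ hp0]; nlinarith
    have hdiv0 : 0 ≤ ds / p := div_nonneg hds0 hp0.le
    have habs : |j| - 2 ≤ ds / p := by
      rcases abs_cases j with ⟨h1, _⟩ | ⟨h1, _⟩ <;> rw [h1, hjcast] <;> linarith
    have hbase1 : (1:ℝ) ≤ 1 + ds / p := by linarith
    have step1 : (1 + ds / p) ^ (-(10:ℝ)) ≤ (1 + ds / p) ^ (-(2:ℝ)) :=
      Real.rpow_le_rpow_of_exponent_le hbase1 (by norm_num)
    set B : ℝ := 1 + max 0 (|j| - 2) with hB
    have hB1 : (1:ℝ) ≤ B := by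
      rw [hB]; nlinarith [le_max_left (0:ℝ) (|j| - 2)]
    have hBle : B ≤ 1 + ds / p := by
      rw [hB]
      have h2 : max 0 (|j| - 2) ≤ ds / p := max_le hdiv0 habs
      linarith
    have step2 : (1 + ds / p) ^ (-(2:ℝ)) ≤ B ^ (-(2:ℝ)) :=
      Real.rpow_le_rpow_of_nonpos (by linarith) hBle (by norm_num)
    have hthird : (1 + |j|) / 3 ≤ B := by
      rcases le_total |j| 2 with h1 | h1
      · have h2 : (1 + |j|) / 3 ≤ 1 := by linarith
        linarith
      · have h2 : |j| - 2 ≤ max 0 (|j| - 2) := le_max_right _ _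
        rw [hB]
        have h3 : (1 + |j|) / 3 ≤ |j| - 1 := by linarith
        linarith
    have hthirdpos : (0:ℝ) < (1 + |j|) / 3 := by positivity
    have step3 : B ^ (-(2:ℝ)) ≤ ((1 + |j|) / 3) ^ (-(2:ℝ)) :=
      Real.rpow_le_rpow_of_nonpos hthirdpos hthird (by norm_num)
    have step4 : ((1 + |j|) / 3) ^ (-(2:ℝ)) = 9 * ((1 + |j|) ^ 2)⁻¹ := by
      rw [rpow_neg_two_eq _ hthirdpos]
      have h1 : (0:ℝ) < 1 + |j| := by positivity
      field_simp
      ring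
    have hfin : (1 + ds / p) ^ (-(10:ℝ)) ≤ 9 * ((1 + |j|) ^ 2)⁻¹ := by
      rw [← step4]; linarith
    simp only [hh]
    exact ENNReal.ofReal_le_ofReal hfin
  have hshift : (∑' m : ℤ, h (m - m₀)) = ∑' n : ℤ, h n := by
    have h2 := (Equiv.subRight m₀).tsum_eq h
    simpa using h2
  have hsplit : (∑' n : ℤ, h n) =
      (∑' n : ℕ, h (n : ℤ)) + ∑' n : ℕ, h (-((n : ℤ) + 1)) :=
    tsum_of_nat_of_neg_add_one ENNReal.summable ENNReal.summable
  have hpos : (∑' n : ℕ, h ((n : ℤ))) ≤ 27 := by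
    refine le_trans (le_of_eq (tsum_congr fun n => ?_)) nat_sum_bound
    simp only [hh]
    have h1 : |(((n:ℤ)):ℝ)| = (n : ℝ) := by
      push_cast; exact abs_of_nonneg (Nat.cast_nonneg n)
    rw [h1]
  have hneg : (∑' n : ℕ, h (-((n : ℤ) + 1))) ≤ 27 := by
    refine le_trans (ENNReal.tsum_le_tsum fun n => ?_) nat_sum_bound
    simp only [hh]
    apply ENNReal.ofReal_le_ofReal
    rw [show ((-((n:ℤ) + 1) : ℤ) : ℝ) = -((n:ℝ) + 1) by push_cast; ring,
      abs_neg, abs_of_nonneg (by positivity : (0:ℝ) ≤ (n:ℝ) + 1)]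
    have h2 : ((1 + ((n:ℝ) + 1)) ^ 2)⁻¹ ≤ ((1 + (n:ℝ)) ^ 2)⁻¹ := by
      apply inv_anti₀ (by positivity)
      nlinarith [Nat.cast_nonneg (α := ℝ) n]
    nlinarith
  calc (∑' m : ℤ, ENNReal.ofReal
        ((1 + setDist (dyadIcc k m) (Set.Icc c d) / p) ^ (-(10:ℝ))))
      ≤ ∑' m : ℤ, h (m - m₀) := ENNReal.tsum_le_tsum key
  _ = ∑' n : ℤ, h n := hshift
  _ = (∑' n : ℕ, h (n : ℤ)) + ∑' n : ℕ, h (-((n : ℤ) + 1)) := hsplit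
  _ ≤ 27 + 27 := add_le_add hpos hneg
  _ = 54 := by norm_num

/- ### The geometric sum over k -/

lemma ksum_bound {L : ℝ} (hL : 0 < L) :
    (∑' k : ℤ, (if L < (2:ℝ) ^ k then ENNReal.ofReal (L / (2:ℝ) ^ k) else 0)) ≤ 2 := by
  set k₁ : ℤ := Int.clog 2 L with hk₁
  have hself : L ≤ (2:ℝ) ^ k₁ := by
    have h := Int.self_le_zpow_clog (b := 2) (R := ℝ) (by norm_num) L
    simpa using h
  set f : ℤ → ℝ≥0∞ := fun k => if L < (2:ℝ) ^ k then ENNReal.ofReal (L / (2:ℝ) ^ k) else 0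
    with hf
  have hsupp : Function.support f ⊆ Set.range (fun n : ℕ => k₁ + (n : ℤ)) := by
    intro k hk
    rw [Function.mem_support] at hk
    by_cases h : L < (2:ℝ) ^ k
    · have hle : k₁ ≤ k := by
        rw [hk₁]
        have h2 : L ≤ ((2:ℕ):ℝ) ^ k := by push_cast; exact h.le
        exact (Int.le_zpow_iff_clog_le (by norm_num) hL).mp h2
      exact ⟨(k - k₁).toNat, by simp; omega⟩
    · exfalso; apply hk; simp only [hf, if_neg h]
  have hinj : Function.Injective (fun n : ℕ => k₁ + (n : ℤ)) := by
    intro a b hab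
    simpa using hab
  have hre : (∑' n : ℕ, f (k₁ + (n : ℤ))) = ∑' k : ℤ, f k :=
    hinj.tsum_eq hsupp
  rw [← hre]
  have hterm : ∀ n : ℕ, f (k₁ + (n : ℤ)) ≤ (ENNReal.ofReal 2⁻¹) ^ n := by
    intro n
    simp only [hf]
    by_cases h : L < (2:ℝ) ^ (k₁ + (n:ℤ))
    · rw [if_pos h, ← ENNReal.ofReal_pow (by norm_num)]
      apply ENNReal.ofReal_le_ofReal
      have hz : (2:ℝ) ^ (k₁ + (n:ℤ)) = (2:ℝ) ^ k₁ * 2 ^ (n:ℕ) := by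
        rw [zpow_add₀ (by norm_num : (2:ℝ) ≠ 0), zpow_natCast]
      have hk₁pos : (0:ℝ) < (2:ℝ) ^ k₁ := zpow_pos (by norm_num) _
      have h2npos : (0:ℝ) < (2:ℝ) ^ (n:ℕ) := by positivity
      rw [hz, div_le_iff₀ (by positivity)]
      calc L ≤ (2:ℝ) ^ k₁ := hself
      _ = (2:ℝ)⁻¹ ^ n * ((2:ℝ) ^ k₁ * 2 ^ (n:ℕ)) := by
            rw [inv_pow]
            field_simp
    · rw [if_neg h]
      exact zero_le
  calc (∑' n : ℕ, f (k₁ + (n : ℤ))) ≤ ∑' n : ℕ, (ENNReal.ofReal 2⁻¹) ^ n :=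
        ENNReal.tsum_le_tsum hterm
  _ = (1 - ENNReal.ofReal 2⁻¹)⁻¹ := ENNReal.tsum_geometric _
  _ = 2 := by
        have h1 : ENNReal.ofReal (2:ℝ)⁻¹ = (2:ℝ≥0∞)⁻¹ := by
          rw [ENNReal.ofReal_inv_of_pos (by norm_num)]
          norm_num
        rw [h1, ENNReal.one_sub_inv_two, inv_inv]

/-- If `b` is integrable, supported on an interval `J = [c,d]`, with mean zero and
`‖b‖₁ ≤ lam |J|`, and `Φ_K` is an `L^∞`-normalized bump adapted to a dyadic interval
`K` with `|K| > |J|`, then `|⟨b, Φ_K⟩| ≲ lam |J| (|J|/|K|) (1+dist(K,J)/|K|)^{-10}`,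
and consequently `Σ_{|K|>|J|} |⟨b, Φ_K⟩| ≲ lam |J|`. -/
theorem bad_piece_pairing_bound :
    ∃ C > (0:ℝ), ∀ lam : ℝ, 0 < lam → ∀ c d : ℝ, c < d →
      ∀ b : ℝ → ℝ, Integrable b volume → Function.support b ⊆ Set.Icc c d →
        (∫ y : ℝ, b y) = 0 → (∫ y : ℝ, |b y|) ≤ lam * (d - c) →
      ∀ Φ : ℤ → ℤ → ℝ → ℝ,
        (∀ k m : ℤ, Differentiable ℝ (Φ k m)) →
        (∀ k m : ℤ, ∀ x : ℝ,
          |Φ k m x| ≤ (1 + Metric.infDist x (dyadIcc k m) / (2:ℝ) ^ k) ^ (-(10:ℝ))) →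
        (∀ k m : ℤ, ∀ x : ℝ,
          |deriv (Φ k m) x| ≤ ((2:ℝ) ^ k)⁻¹ *
            (1 + Metric.infDist x (dyadIcc k m) / (2:ℝ) ^ k) ^ (-(10:ℝ))) →
        (∀ k m : ℤ, d - c < (2:ℝ) ^ k →
          |∫ y : ℝ, b y * Φ k m y| ≤
            C * lam * (d - c) * ((d - c) / (2:ℝ) ^ k) *
              (1 + setDist (dyadIcc k m) (Set.Icc c d) / (2:ℝ) ^ k) ^ (-(10:ℝ))) ∧
        (∑' K : {km : ℤ × ℤ // d - c < (2:ℝ) ^ km.1},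
            ENNReal.ofReal |∫ y : ℝ, b y * Φ K.1.1 K.1.2 y|) ≤
          ENNReal.ofReal (C * lam * (d - c)) := by
  refine ⟨200, by norm_num, ?_⟩
  intro lam hlam c d hcd b hbint hbsupp hbmean hbL1 Φ hdiff hΦbound hΦ'bound
  have hL : 0 < d - c := by linarith
  have hJne : (Set.Icc c d).Nonempty := Set.nonempty_Icc.mpr hcd.le
  -- the key pairing estimate with constant 1
  have key : ∀ k m : ℤ, d - c < (2:ℝ) ^ k →
      |∫ y : ℝ, b y * Φ k m y| ≤
        lam * (d - c) * ((d - c) / (2:ℝ) ^ k) *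
          (1 + setDist (dyadIcc k m) (Set.Icc c d) / (2:ℝ) ^ k) ^ (-(10:ℝ)) := by
    intro k m hk
    have hp0 : (0:ℝ) < (2:ℝ) ^ k := zpow_pos (by norm_num) k
    set p : ℝ := (2:ℝ) ^ k with hpdef
    set c₀ : ℝ := (c + d) / 2 with hc₀def
    have hc₀ : c₀ ∈ Set.Icc c d := ⟨by rw [hc₀def]; linarith, by rw [hc₀def]; linarith⟩
    set ds := setDist (dyadIcc k m) (Set.Icc c d) with hdsdef
    have hds0 : 0 ≤ ds := setDist_nonneg (dyadIcc_nonempty k m) hJne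
    set E : ℝ := (1 + ds / p) ^ (-(10:ℝ)) with hEdef
    have hE0 : 0 ≤ E := Real.rpow_nonneg (by positivity) _
    set Cd : ℝ := p⁻¹ * E with hCd
    have hCd0 : 0 ≤ Cd := mul_nonneg (by positivity) hE0
    -- derivative bound on the interval
    have hderiv : ∀ ξ ∈ Set.Icc c d, ‖deriv (Φ k m) ξ‖ ≤ Cd := by
      intro ξ hξ
      rw [Real.norm_eq_abs]
      refine (hΦ'bound k m ξ).trans ?_
      rw [hCd]
      refine mul_le_mul_of_nonneg_left ?_ (by positivity)
      rw [hEdef]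
      refine Real.rpow_le_rpow_of_nonpos (by positivity) ?_ (by norm_num)
      have h1 : ds ≤ Metric.infDist ξ (dyadIcc k m) :=
        setDist_le_infDist (dyadIcc_nonempty k m) hξ
      gcongr
    -- mean value theorem
    have hmvt : ∀ y ∈ Set.Icc c d, |Φ k m y - Φ k m c₀| ≤ Cd * |y - c₀| := by
      intro y hy
      have h := Convex.norm_image_sub_le_of_norm_deriv_le
        (f := Φ k m) (fun x _ => (hdiff k m).differentiableAt)
        hderiv (convex_Icc c d) hc₀ hy
      simpa [Real.norm_eq_abs] using h
    -- integrability
    have hΦle1 : ∀ x, |Φ k m x| ≤ 1 := by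
      intro x
      refine (hΦbound k m x).trans ?_
      refine Real.rpow_le_one_of_one_le_of_nonpos ?_ (by norm_num)
      have h1 : 0 ≤ Metric.infDist x (dyadIcc k m) := Metric.infDist_nonneg
      have h2 : 0 ≤ Metric.infDist x (dyadIcc k m) / p := by positivity
      linarith
    have hmeas : AEStronglyMeasurable (Φ k m) volume :=
      ((hdiff k m).continuous).aestronglyMeasurable
    have hint1 : Integrable (fun y => Φ k m y * b y) volume :=
      hbint.bdd_mul (c := 1) hmeas (ae_of_all _ fun x => by rw [Real.norm_eq_abs]; exact hΦle1 x)
    have hint : Integrable (fun y => b y * Φ k m y) volume := by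
      simpa [mul_comm] using hint1
    have hint2 : Integrable (fun y => b y * Φ k m c₀) volume := hbint.mul_const _
    have hint3 : Integrable (fun y => b y * (Φ k m y - Φ k m c₀)) volume := by
      have h := hint.sub hint2
      simpa [mul_sub] using (show Integrable (fun y => b y * Φ k m y - b y * Φ k m c₀) volume from h)
    have hsplit : (∫ y : ℝ, b y * Φ k m y) = ∫ y : ℝ, b y * (Φ k m y - Φ k m c₀) := by
      have h1 : (∫ y : ℝ, b y * (Φ k m y - Φ k m c₀))
          = (∫ y : ℝ, b y * Φ k m y) - ∫ y : ℝ, b y * Φ k m c₀ := by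
        simp_rw [mul_sub]
        exact integral_sub hint hint2
      rw [h1, integral_mul_const, hbmean, zero_mul, sub_zero]
    have hpoint : ∀ y : ℝ, |b y| * |Φ k m y - Φ k m c₀| ≤ |b y| * (Cd * (d - c)) := by
      intro y
      by_cases hy : b y = 0
      · simp [hy]
      · have hmem : y ∈ Set.Icc c d := hbsupp hy
        have h1 := hmvt y hmem
        have h2 : |y - c₀| ≤ d - c := by
          obtain ⟨h3, h4⟩ := hmem
          obtain ⟨h5, h6⟩ := hc₀
          rw [abs_le]
          constructor <;> linarith
        have h7 : |Φ k m y - Φ k m c₀| ≤ Cd * (d - c) := h1.trans (by nlinarith)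
        exact mul_le_mul_of_nonneg_left h7 (abs_nonneg _)
    have habs0 : 0 ≤ ∫ y : ℝ, |b y| := integral_nonneg fun y => abs_nonneg _
    calc |∫ y : ℝ, b y * Φ k m y| = |∫ y : ℝ, b y * (Φ k m y - Φ k m c₀)| := by
          rw [hsplit]
    _ ≤ ∫ y : ℝ, |b y| * |Φ k m y - Φ k m c₀| := by
          have h := norm_integral_le_integral_norm (fun y : ℝ => b y * (Φ k m y - Φ k m c₀))
            (μ := volume)
          simpa [Real.norm_eq_abs, abs_mul] using h
    _ ≤ ∫ y : ℝ, |b y| * (Cd * (d - c)) := by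
          have hint4 : Integrable (fun y => |b y| * |Φ k m y - Φ k m c₀|) volume := by
            simpa [abs_mul] using hint3.abs
          exact integral_mono hint4 (hbint.abs.mul_const _) hpoint
    _ = (∫ y : ℝ, |b y|) * (Cd * (d - c)) := integral_mul_const _ _
    _ ≤ (lam * (d - c)) * (Cd * (d - c)) := by
          refine mul_le_mul_of_nonneg_right hbL1 (by positivity)
    _ = lam * (d - c) * ((d - c) / p) * E := by
          rw [hCd, div_eq_mul_inv]; ring
  constructor
  · intro k m hk
    have h := key k m hk
    have hds0 : 0 ≤ setDist (dyadIcc k m) (Set.Icc c d) :=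
      setDist_nonneg (dyadIcc_nonempty k m) hJne
    have hp0 : (0:ℝ) < (2:ℝ) ^ k := zpow_pos (by norm_num) k
    have hE0 : 0 ≤ (1 + setDist (dyadIcc k m) (Set.Icc c d) / (2:ℝ) ^ k) ^ (-(10:ℝ)) :=
      Real.rpow_nonneg (by positivity) _
    have hX0 : 0 ≤ lam * (d - c) * ((d - c) / (2:ℝ) ^ k) *
        (1 + setDist (dyadIcc k m) (Set.Icc c d) / (2:ℝ) ^ k) ^ (-(10:ℝ)) := by
      positivity
    nlinarith [h, hX0]
  · -- the sum
    set G : ℤ × ℤ → ℝ≥0∞ := fun km =>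
      if d - c < (2:ℝ) ^ km.1 then
        ENNReal.ofReal (lam * (d - c) * ((d - c) / (2:ℝ) ^ km.1) *
          (1 + setDist (dyadIcc km.1 km.2) (Set.Icc c d) / (2:ℝ) ^ km.1) ^ (-(10:ℝ)))
      else 0 with hG
    have h1 : (∑' K : {km : ℤ × ℤ // d - c < (2:ℝ) ^ km.1},
        ENNReal.ofReal |∫ y : ℝ, b y * Φ K.1.1 K.1.2 y|) ≤
        ∑' K : {km : ℤ × ℤ // d - c < (2:ℝ) ^ km.1}, G K.1 := by
      refine ENNReal.tsum_le_tsum fun K => ?_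
      simp only [hG, if_pos K.2]
      exact ENNReal.ofReal_le_ofReal (key K.1.1 K.1.2 K.2)
    have h2 : (∑' K : {km : ℤ × ℤ // d - c < (2:ℝ) ^ km.1}, G K.1) ≤
        ∑' km : ℤ × ℤ, G km :=
      Summable.tsum_le_tsum_of_inj Subtype.val Subtype.val_injective
        (fun _ _ => zero_le) (fun _ => le_rfl) ENNReal.summable ENNReal.summable
    have h3 : (∑' km : ℤ × ℤ, G km) = ∑' k : ℤ, ∑' m : ℤ, G (k, m) :=
      ENNReal.tsum_prod'
    have h4 : ∀ k : ℤ, (∑' m : ℤ, G (k, m)) ≤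
        (if d - c < (2:ℝ) ^ k then ENNReal.ofReal ((d - c) / (2:ℝ) ^ k) else 0) *
          (ENNReal.ofReal (lam * (d - c)) * 54) := by
      intro k
      by_cases hk : d - c < (2:ℝ) ^ k
      · have hp0 : (0:ℝ) < (2:ℝ) ^ k := zpow_pos (by norm_num) k
        simp only [hG, if_pos hk]
        have hfact : ∀ m : ℤ,
            ENNReal.ofReal (lam * (d - c) * ((d - c) / (2:ℝ) ^ k) *
              (1 + setDist (dyadIcc k m) (Set.Icc c d) / (2:ℝ) ^ k) ^ (-(10:ℝ)))
            = ENNReal.ofReal (lam * (d - c) * ((d - c) / (2:ℝ) ^ k)) *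
              ENNReal.ofReal
              ((1 + setDist (dyadIcc k m) (Set.Icc c d) / (2:ℝ) ^ k) ^ (-(10:ℝ))) := by
          intro m
          exact ENNReal.ofReal_mul (by positivity)
        rw [tsum_congr hfact, ENNReal.tsum_mul_left]
        calc ENNReal.ofReal (lam * (d - c) * ((d - c) / (2:ℝ) ^ k)) *
              ∑' m : ℤ, ENNReal.ofReal
                ((1 + setDist (dyadIcc k m) (Set.Icc c d) / (2:ℝ) ^ k) ^ (-(10:ℝ)))
            ≤ ENNReal.ofReal (lam * (d - c) * ((d - c) / (2:ℝ) ^ k)) * 54 :=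
              mul_le_mul_right (msum_bound hcd hk) _
        _ = ENNReal.ofReal ((d - c) / (2:ℝ) ^ k) * (ENNReal.ofReal (lam * (d - c)) * 54) := by
              rw [show lam * (d - c) * ((d - c) / (2:ℝ) ^ k)
                  = ((d - c) / (2:ℝ) ^ k) * (lam * (d - c)) by ring,
                ENNReal.ofReal_mul (by positivity)]
              ring
      · simp [hG, hk]
    have h5 : (∑' k : ℤ, ∑' m : ℤ, G (k, m)) ≤
        (∑' k : ℤ, (if d - c < (2:ℝ) ^ k then ENNReal.ofReal ((d - c) / (2:ℝ) ^ k) else 0)) *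
          (ENNReal.ofReal (lam * (d - c)) * 54) := by
      calc (∑' k : ℤ, ∑' m : ℤ, G (k, m))
          ≤ ∑' k : ℤ, (if d - c < (2:ℝ) ^ k then ENNReal.ofReal ((d - c) / (2:ℝ) ^ k) else 0) *
              (ENNReal.ofReal (lam * (d - c)) * 54) := ENNReal.tsum_le_tsum h4
      _ = _ := ENNReal.tsum_mul_right
    have h6 := ksum_bound hL
    calc (∑' K : {km : ℤ × ℤ // d - c < (2:ℝ) ^ km.1},
            ENNReal.ofReal |∫ y : ℝ, b y * Φ K.1.1 K.1.2 y|)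
        ≤ ∑' km : ℤ × ℤ, G km := h1.trans h2
    _ = ∑' k : ℤ, ∑' m : ℤ, G (k, m) := h3
    _ ≤ (∑' k : ℤ, (if d - c < (2:ℝ) ^ k then ENNReal.ofReal ((d - c) / (2:ℝ) ^ k) else 0)) *
          (ENNReal.ofReal (lam * (d - c)) * 54) := h5
    _ ≤ 2 * (ENNReal.ofReal (lam * (d - c)) * 54) := mul_le_mul_left h6 _
    _ = 108 * ENNReal.ofReal (lam * (d - c)) := by ring
    _ ≤ 200 * ENNReal.ofReal (lam * (d - c)) := by
          exact mul_le_mul_left (by norm_num) _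
    _ = ENNReal.ofReal (200 * lam * (d - c)) := by
          rw [show (200:ℝ≥0∞) = ENNReal.ofReal 200 from (ENNReal.ofReal_ofNat 200).symm,
            ← ENNReal.ofReal_mul (by norm_num : (0:ℝ) ≤ 200)]
          congr 1
          ring
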